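/- Let N ∈ ℕ, 1 ≤ n⁺ ≤ N, α ∈ (0,1), v > 0, let W⁺ be a probability weighting function, let h⁺ be the gain decision weights, let J be the transitional index, and define Y = v·(∑_{j'=1}^{J} h⁺_{j'})^{α/(1−α)} / [ (∑_{j'=1}^{J} h⁺_{j'})^{1/(1−α)} + J^{α/(1−α)} · ∑_{j'=J+1}^{n⁺} (h⁺_{j'})^{1/(1−α)} ] and y*_j = Y for 1 ≤ j ≤ J and y*_j = ( J·h⁺_j / ∑_{j'=1}^{J} h⁺_{j'} )^{α/(1−α)} · Y for J+1 ≤ j ≤ n⁺. Then y* is feasible for the gain subproblem and is its unique global minimizer: every feasible y with y ≠ y* satisfies ∑_{j=1}^{n⁺} y_j^{1/α} > ∑_{j=1}^{n⁺} (y*_j)^{1/α}. -/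

import Mathlib

open Finset
set_option maxHeartbeats 1000000


/-- An inverse S-shaped function on `[0,1]`: strictly increasing, continuously
differentiable, with a derivative strictly decreasing then strictly increasing. -/
def InverseSShaped (W : ℝ → ℝ) : Prop :=
  StrictMonoOn W (Set.Icc (0 : ℝ) 1) ∧
  ContDiffOn ℝ 1 W (Set.Icc (0 : ℝ) 1) ∧
  ∃ x₀ ∈ Set.Icc (0 : ℝ) 1,
    StrictAntiOn (deriv W) (Set.Icc (0 : ℝ) x₀) ∧ StrictMonoOn (deriv W) (Set.Icc x₀ 1)

/-- A probability weighting function: inverse S-shaped with `W 0 = 0` and `W 1 = 1`. -/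
def IsPWF (W : ℝ → ℝ) : Prop :=
  InverseSShaped W ∧ W 0 = 0 ∧ W 1 = 1

/-- Gain decision weights: `h⁺_j = W⁺((n−j+1)/N) − W⁺((n−j)/N)` for `j = 1,…,n`. -/
noncomputable def gainW (W : ℝ → ℝ) (N n j : ℕ) : ℝ :=
  W (((n : ℝ) - j + 1) / N) - W (((n : ℝ) - j) / N)

/-- The transitional index
`J = min{ j ∈ {1,…,n} : j = n ∨ j·h⁺_{j+1} ≥ ∑_{j'≤j} h⁺_{j'} }`. -/
noncomputable def transIdx (W : ℝ → ℝ) (N n : ℕ) : ℕ :=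
  sInf {j : ℕ | 1 ≤ j ∧ j ≤ n ∧
    (j = n ∨ ∑ j' ∈ Finset.Icc 1 j, gainW W N n j' ≤ (j : ℝ) * gainW W N n (j + 1))}

/-- Feasibility for the gain subproblem: `0 ≤ y_1 ≤ … ≤ y_n` and `∑ h⁺_j y_j = v`. -/
def GainFeasible (W : ℝ → ℝ) (N n : ℕ) (v : ℝ) (y : ℕ → ℝ) : Prop :=
  0 ≤ y 1 ∧ (∀ j ∈ Finset.Icc 1 (n - 1), y j ≤ y (j + 1)) ∧
  ∑ j ∈ Finset.Icc 1 n, gainW W N n j * y j = v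

/-- The constant `Y` of the candidate optimal solution of the gain subproblem. -/
noncomputable def gainY (W : ℝ → ℝ) (N n : ℕ) (α v : ℝ) : ℝ :=
  v * (∑ j' ∈ Finset.Icc 1 (transIdx W N n), gainW W N n j') ^ (α / (1 - α)) /
    ((∑ j' ∈ Finset.Icc 1 (transIdx W N n), gainW W N n j') ^ ((1 : ℝ) / (1 - α)) +
      (transIdx W N n : ℝ) ^ (α / (1 - α)) *
        ∑ j' ∈ Finset.Icc (transIdx W N n + 1) n, gainW W N n j' ^ ((1 : ℝ) / (1 - α)))

/-- The candidate optimal solution `y*` of the gain subproblem. -/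
noncomputable def gainOpt (W : ℝ → ℝ) (N n : ℕ) (α v : ℝ) : ℕ → ℝ := fun j =>
  if j ≤ transIdx W N n then gainY W N n α v
  else ((transIdx W N n : ℝ) * gainW W N n j /
      ∑ j' ∈ Finset.Icc 1 (transIdx W N n), gainW W N n j') ^ (α / (1 - α)) * gainY W N n α v


section Aux
variable {W : ℝ → ℝ} {N n : ℕ}

lemma Npos (hn1 : 1 ≤ n) (hnN : n ≤ N) : (0:ℝ) < N := by
  have : 1 ≤ N := le_trans hn1 hnN
  exact_mod_cast Nat.lt_of_lt_of_le Nat.zero_lt_one this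

lemma gainW_pos (hW : IsPWF W) (hn1 : 1 ≤ n) (hnN : n ≤ N)
    {j : ℕ} (hj1 : 1 ≤ j) (hjn : j ≤ n) : 0 < gainW W N n j := by
  have hN : (0:ℝ) < N := Npos hn1 hnN
  have hjn' : (j:ℝ) ≤ n := by exact_mod_cast hjn
  have hj1' : (1:ℝ) ≤ j := by exact_mod_cast hj1
  have hnN' : (n:ℝ) ≤ N := by exact_mod_cast hnN
  have ha : (0:ℝ) ≤ ((n:ℝ) - j) / N := div_nonneg (by linarith) hN.le
  have hb : ((n:ℝ) - j + 1) / N ≤ 1 := by rw [div_le_one hN]; linarith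
  have hab : ((n:ℝ) - j) / N < ((n:ℝ) - j + 1) / N := by
    apply div_lt_div_of_pos_right (by linarith) hN
  have := hW.1.1 (Set.mem_Icc.2 ⟨ha, le_trans hab.le hb⟩)
    (Set.mem_Icc.2 ⟨le_trans ha hab.le, hb⟩) hab
  unfold gainW; linarith

/-- partial sums of weights -/
lemma sumW_pos (hW : IsPWF W) (hn1 : 1 ≤ n) (hnN : n ≤ N)
    {k : ℕ} (hk1 : 1 ≤ k) (hkn : k ≤ n) :
    0 < ∑ j ∈ Finset.Icc 1 k, gainW W N n j := by
  apply Finset.sum_pos ?_ ⟨1, by simp [hk1]⟩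
  intro i hi
  simp only [Finset.mem_Icc] at hi
  exact gainW_pos hW hn1 hnN hi.1 (le_trans hi.2 hkn)

lemma transIdx_mem (hn1 : 1 ≤ n) :
    1 ≤ transIdx W N n ∧ transIdx W N n ≤ n ∧
    (transIdx W N n = n ∨ ∑ j' ∈ Finset.Icc 1 (transIdx W N n), gainW W N n j' ≤
      (transIdx W N n : ℝ) * gainW W N n (transIdx W N n + 1)) := by
  have hne : {j : ℕ | 1 ≤ j ∧ j ≤ n ∧
      (j = n ∨ ∑ j' ∈ Finset.Icc 1 j, gainW W N n j' ≤ (j : ℝ) * gainW W N n (j + 1))}.Nonempty :=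
    ⟨n, hn1, le_refl n, Or.inl rfl⟩
  exact Nat.sInf_mem hne

lemma transIdx_min (hn1 : 1 ≤ n) {k : ℕ} (hk1 : 1 ≤ k) (hk : k < transIdx W N n) :
    (k:ℝ) * gainW W N n (k + 1) < ∑ j' ∈ Finset.Icc 1 k, gainW W N n j' := by
  have h := Nat.notMem_of_lt_sInf hk
  simp only [Set.mem_setOf_eq, not_and, not_or, not_le] at h
  have hkn : k ≤ n := le_trans (Nat.le_of_lt hk) (transIdx_mem (W:=W) (N:=N) hn1).2.1
  exact (h hk1 hkn).2

end Aux

section Aux2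
variable {W : ℝ → ℝ} {N n : ℕ}

lemma avg_le (hW : IsPWF W) (hn1 : 1 ≤ n) (hnN : n ≤ N) :
    ∀ d k : ℕ, 1 ≤ k → k + d = transIdx W N n →
    (∑ j ∈ Finset.Icc 1 (transIdx W N n), gainW W N n j) * k ≤
      (transIdx W N n : ℝ) * ∑ j ∈ Finset.Icc 1 k, gainW W N n j := by
  intro d
  induction d with
  | zero =>
    intro k hk1 hk
    simp only [Nat.add_zero] at hk
    subst hk
    rw [mul_comm]
  | succ d ih =>
    intro k hk1 hk
    have hk' : (k + 1) + d = transIdx W N n := by omega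
    have hkJ : k < transIdx W N n := by omega
    have hJn := (transIdx_mem (W:=W) (N:=N) hn1).2.1
    have ihk := ih (k+1) (by omega) hk'
    have hmin := transIdx_min (W:=W) (N:=N) hn1 hk1 hkJ
    have hsp : ∑ j ∈ Finset.Icc 1 (k+1), gainW W N n j
        = (∑ j ∈ Finset.Icc 1 k, gainW W N n j) + gainW W N n (k+1) :=
      Finset.sum_Icc_succ_top (by omega) _
    have hSk : 0 < ∑ j ∈ Finset.Icc 1 k, gainW W N n j :=
      sumW_pos hW hn1 hnN hk1 (by omega)
    have hJpos : (0:ℝ) < (transIdx W N n : ℝ) := by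
      exact_mod_cast Nat.lt_of_lt_of_le Nat.zero_lt_one (transIdx_mem (W:=W) (N:=N) hn1).1
    have hkpos : (0:ℝ) < (k:ℝ) := by exact_mod_cast hk1
    -- k * S_{k+1} < (k+1) * S_k
    have hstep : (k:ℝ) * (∑ j ∈ Finset.Icc 1 (k+1), gainW W N n j)
        < ((k:ℝ)+1) * ∑ j ∈ Finset.Icc 1 k, gainW W N n j := by
      rw [hsp]; nlinarith
    have hcast : ((k+1:ℕ):ℝ) = (k:ℝ)+1 := by push_cast; ring
    rw [hcast] at ihk
    nlinarith

lemma abel_aux (μ y : ℕ → ℝ) :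
    ∀ Jn, 1 ≤ Jn → (∀ k, 1 ≤ k → k < Jn → ∑ j ∈ Finset.Icc 1 k, μ j ≤ 0) →
    (∀ k, 1 ≤ k → k < Jn → y k ≤ y (k+1)) →
    (∑ j ∈ Finset.Icc 1 Jn, μ j) * y Jn ≤ ∑ j ∈ Finset.Icc 1 Jn, μ j * y j := by
  intro Jn
  induction Jn with
  | zero => intro h; omega
  | succ m ih =>
    intro _ hM hy
    rcases Nat.eq_or_lt_of_le (Nat.one_le_iff_ne_zero.2 (Nat.succ_ne_zero m)) with h1 | h1
    · have hm0 : m = 0 := by omega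
      subst hm0; simp
    · have hm1 : 1 ≤ m := by omega
      have hsp : ∀ f : ℕ → ℝ, ∑ j ∈ Finset.Icc 1 (m+1), f j
          = (∑ j ∈ Finset.Icc 1 m, f j) + f (m+1) :=
        fun f => Finset.sum_Icc_succ_top (by omega) f
      have ihm := ih hm1 (fun k hk1 hk => hM k hk1 (by omega))
        (fun k hk1 hk => hy k hk1 (by omega))
      have hMm : ∑ j ∈ Finset.Icc 1 m, μ j ≤ 0 := hM m hm1 (by omega)
      have hym : y m ≤ y (m+1) := hy m hm1 (by omega)
      rw [hsp μ, hsp (fun j => μ j * y j)]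
      have : (∑ j ∈ Finset.Icc 1 m, μ j) * y (m+1) ≤ (∑ j ∈ Finset.Icc 1 m, μ j) * y m :=
        mul_le_mul_of_nonpos_left hym hMm
      nlinarith

lemma tangent_lt {t x p : ℝ} (ht : 0 < t) (hx : 0 ≤ x) (hp : 1 < p) (hne : x ≠ t) :
    t ^ p + p * t ^ (p - 1) * (x - t) < x ^ p := by
  have hs : -1 ≤ x / t - 1 := by
    have : 0 ≤ x / t := div_nonneg hx ht.le
    linarith
  have hs' : x / t - 1 ≠ 0 := by
    intro h
    apply hne
    field_simp at h
    linarith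
  have hb := one_add_mul_self_lt_rpow_one_add hs hs' hp
  rw [show (1 : ℝ) + (x / t - 1) = x / t by ring] at hb
  have htp : 0 < t ^ p := Real.rpow_pos_of_pos ht p
  have hdiv : (x / t) ^ p = x ^ p / t ^ p := Real.div_rpow hx ht.le p
  rw [hdiv] at hb
  have hmul := mul_lt_mul_of_pos_right hb htp
  rw [div_mul_cancel₀ _ htp.ne'] at hmul
  calc t ^ p + p * t ^ (p - 1) * (x - t)
      = (1 + p * (x / t - 1)) * t ^ p := by
        rw [Real.rpow_sub ht, Real.rpow_one]
        field_simp
    _ < x ^ p := hmul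

end Aux2

section Shape

/-- one-sided-correct derivative of `W` on `[0,1]` -/
noncomputable def gD (W : ℝ → ℝ) : ℝ → ℝ := derivWithin W (Set.Icc (0:ℝ) 1)

variable {W : ℝ → ℝ} {N n : ℕ}

lemma gD_cont (hW : IsPWF W) : ContinuousOn (gD W) (Set.Icc (0:ℝ) 1) :=
  hW.1.2.1.continuousOn_derivWithin (uniqueDiffOn_Icc (by norm_num)) le_rfl

lemma gD_eq (hW : IsPWF W) {x : ℝ} (hx : x ∈ Set.Ioo (0:ℝ) 1) : gD W x = deriv W x :=
  derivWithin_of_mem_nhds (Icc_mem_nhds hx.1 hx.2)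

lemma gD_hasDeriv (hW : IsPWF W) {x : ℝ} (hx : x ∈ Set.Ioo (0:ℝ) 1) :
    HasDerivAt W (gD W x) x := by
  have hd : DifferentiableOn ℝ W (Set.Icc (0:ℝ) 1) := hW.1.2.1.differentiableOn one_ne_zero
  have h2 := hd.differentiableAt (Icc_mem_nhds hx.1 hx.2)
  rw [gD_eq hW hx]
  exact h2.hasDerivAt

lemma gD_intble (hW : IsPWF W) {a b : ℝ} (h0 : 0 ≤ a) (hab : a ≤ b) (hb : b ≤ 1) :
    IntervalIntegrable (gD W) MeasureTheory.volume a b :=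
  ContinuousOn.intervalIntegrable_of_Icc hab ((gD_cont hW).mono (Set.Icc_subset_Icc h0 hb))

lemma gD_ftc (hW : IsPWF W) {a b : ℝ} (h0 : 0 ≤ a) (hab : a ≤ b) (hb : b ≤ 1) :
    ∫ x in a..b, gD W x = W b - W a := by
  apply intervalIntegral.integral_eq_sub_of_hasDeriv_right_of_le hab
  · exact hW.1.2.1.continuousOn.mono (Set.Icc_subset_Icc h0 hb)
  · intro x hx
    exact (gD_hasDeriv hW ⟨lt_of_le_of_lt h0 hx.1, lt_of_lt_of_le hx.2 hb⟩).hasDerivWithinAt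
  · exact gD_intble hW h0 hab hb

lemma intervalIntegral_lt {f1 f2 : ℝ → ℝ} {a b : ℝ} (hab : a < b)
    (h1 : IntervalIntegrable f1 MeasureTheory.volume a b)
    (h2 : IntervalIntegrable f2 MeasureTheory.volume a b)
    (hpt : ∀ x ∈ Set.Ioo a b, f1 x < f2 x) :
    ∫ x in a..b, f1 x < ∫ x in a..b, f2 x := by
  have := intervalIntegral.intervalIntegral_pos_of_pos_on (h2.sub h1)
    (fun x hx => sub_pos.2 (hpt x hx)) hab
  rw [intervalIntegral.integral_sub h2 h1] at this
  linarith

lemma gainW_eq_integral (hW : IsPWF W) (hn1 : 1 ≤ n) (hnN : n ≤ N)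
    {j : ℕ} (hj1 : 1 ≤ j) (hjn : j ≤ n) :
    gainW W N n j = ∫ x in (((n:ℝ)-j)/N)..(((n:ℝ)-j+1)/N), gD W x := by
  have hN : (0:ℝ) < N := Npos hn1 hnN
  have hjn' : (j:ℝ) ≤ n := by exact_mod_cast hjn
  have hj1' : (1:ℝ) ≤ j := by exact_mod_cast hj1
  have hnN' : (n:ℝ) ≤ N := by exact_mod_cast hnN
  rw [gD_ftc hW (div_nonneg (by linarith) hN.le)
    (by gcongr <;> linarith)
    (by rw [div_le_one hN]; linarith)]
  rfl

end Shape

section Shape2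
variable {W : ℝ → ℝ} {N n : ℕ}

lemma gainW_shape (hW : IsPWF W) (hn1 : 1 ≤ n) (hnN : n ≤ N)
    {j : ℕ} (hj1 : 1 ≤ j) (hj2 : j + 2 ≤ n)
    (hle : gainW W N n j ≤ gainW W N n (j+1)) :
    gainW W N n (j+1) < gainW W N n (j+2) := by
  obtain ⟨x₀, hx₀, hanti, hmono⟩ := hW.1.2.2
  have hN : (0:ℝ) < N := Npos hn1 hnN
  have hnN' : (n:ℝ) ≤ N := by exact_mod_cast hnN
  have hj2' : (j:ℝ) + 2 ≤ n := by exact_mod_cast hj2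
  have hj1' : (1:ℝ) ≤ j := by exact_mod_cast hj1
  set δ : ℝ := 1/N with hδdef
  have hδ : 0 < δ := by positivity
  set c : ℝ := ((n:ℝ) - j - 2)/N with hcdef
  set d : ℝ := ((n:ℝ) - j - 1)/N with hddef
  set e : ℝ := ((n:ℝ) - j)/N with hedef
  set bb : ℝ := ((n:ℝ) - j + 1)/N with hbdef
  have hcd : c + δ = d := by rw [hcdef, hddef, hδdef]; field_simp; try ring
  have hde : d + δ = e := by rw [hddef, hedef, hδdef]; field_simp; try ring
  have heb : e + δ = bb := by rw [hedef, hbdef, hδdef]; field_simp; try ring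
  have hc0 : 0 ≤ c := by rw [hcdef]; apply div_nonneg (by linarith) hN.le
  have hb1 : bb ≤ 1 := by rw [hbdef, div_le_one hN]; linarith
  have hcd' : c < d := by linarith
  have hde' : d < e := by linarith
  have heb' : e < bb := by linarith
  have hd0 : 0 < d := by linarith
  have he1 : e < 1 := by linarith
  have hd1 : d < 1 := by linarith
  have he0 : 0 < e := by linarith
  -- integral representations
  have hI1 : gainW W N n j = ∫ x in e..bb, gD W x := by
    have h := gainW_eq_integral hW hn1 hnN hj1 (by omega)
    rwa [show ((n:ℝ) - j)/N = e from rfl, show ((n:ℝ) - j + 1)/N = bb from rfl] at h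
  have hI2 : gainW W N n (j+1) = ∫ x in d..e, gD W x := by
    have h := gainW_eq_integral hW hn1 hnN (j := j+1) (by omega) (by omega)
    push_cast at h
    rwa [show ((n:ℝ) - (j+1))/N = d by rw [hddef]; try ring_nf,
      show ((n:ℝ) - (j+1) + 1)/N = e by rw [hedef]; try ring_nf] at h
  have hI3 : gainW W N n (j+2) = ∫ x in c..d, gD W x := by
    have h := gainW_eq_integral hW hn1 hnN (j := j+2) (by omega) hj2
    push_cast at h
    rwa [show ((n:ℝ) - (j+2))/N = c by rw [hcdef]; try ring_nf,
      show ((n:ℝ) - (j+2) + 1)/N = d by rw [hddef]; try ring_nf] at h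
  -- pointwise monotonicity helpers
  have hA : ∀ x y : ℝ, 0 < x → x < y → y < 1 → y ≤ x₀ → gD W y < gD W x := by
    intro x y hx hxy hy1 hyx₀
    rw [gD_eq hW ⟨hx, hxy.trans hy1⟩, gD_eq hW ⟨hx.trans hxy, hy1⟩]
    exact hanti ⟨hx.le, hxy.le.trans hyx₀⟩ ⟨(hx.trans hxy).le, hyx₀⟩ hxy
  have hM : ∀ x y : ℝ, 0 < x → x < y → y < 1 → x₀ ≤ x → gD W x < gD W y := by
    intro x y hx hxy hy1 hx₀x
    rw [gD_eq hW ⟨hx, hxy.trans hy1⟩, gD_eq hW ⟨hx.trans hxy, hy1⟩]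
    exact hmono ⟨hx₀x, (hxy.trans hy1).le⟩ ⟨hx₀x.trans hxy.le, hy1.le⟩ hxy
  -- integrability facts
  have hint_cd : IntervalIntegrable (gD W) MeasureTheory.volume c d :=
    gD_intble hW hc0 hcd'.le (by linarith)
  have hint_de : IntervalIntegrable (gD W) MeasureTheory.volume d e :=
    gD_intble hW hd0.le hde'.le he1.le
  have hint_eb : IntervalIntegrable (gD W) MeasureTheory.volume e bb :=
    gD_intble hW he0.le heb'.le hb1
  have hint_shift : ∀ a b' : ℝ, 0 ≤ a → a ≤ b' → b' + δ ≤ 1 →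
      IntervalIntegrable (fun x => gD W (x + δ)) MeasureTheory.volume a b' := by
    intro a b' ha hab hb'
    apply ContinuousOn.intervalIntegrable_of_Icc hab
    apply (gD_cont hW).comp (Continuous.continuousOn (by continuity))
    intro x hx
    simp only [Set.mem_Icc] at hx ⊢
    exact ⟨by linarith [hx.1], by linarith [hx.2]⟩
  have hshift : ∀ a b' : ℝ, (∫ x in a..b', gD W (x + δ)) = ∫ x in (a+δ)..(b'+δ), gD W x :=
    fun a b' => intervalIntegral.integral_comp_add_right _ δ
  rcases le_or_gt e x₀ with hcase1 | hcase1
  · -- decreasing region: I3 > I2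
    have hlt := intervalIntegral_lt hcd' (hint_shift c d hc0 hcd'.le (by linarith))
      hint_cd (fun x hx => hA x (x+δ) (lt_of_le_of_lt hc0 hx.1) (by linarith)
        (by have := hx.2; linarith) (by have := hx.2; linarith))
    rw [hshift, hcd, hde] at hlt
    rw [hI2, hI3]; linarith
  rcases le_or_gt x₀ d with hcase2 | hcase2
  · -- increasing region: I2 < I1, contradiction
    exfalso
    have hlt := intervalIntegral_lt hde' hint_de (hint_shift d e hd0.le hde'.le (by linarith))
      (fun x hx => hM x (x+δ) (hd0.trans hx.1) (by linarith)
        (by have := hx.2; linarith) (by linarith [hx.1]))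
    rw [hshift, hde, heb] at hlt
    rw [hI1, hI2] at hle; linarith
  · -- mixed region
    have hconst : ∀ a b' C : ℝ, (∫ _ in a..b', C) = (b' - a) * C := by
      intro a b' C; rw [intervalIntegral.integral_const, smul_eq_mul]
    rcases le_or_gt (gD W e) (gD W d) with hsub | hsub
    · -- I2 < δ * gD W d < I3
      have hi : δ * gD W d < ∫ x in c..d, gD W x := by
        have hlt := intervalIntegral_lt hcd' (intervalIntegrable_const) hint_cd
          (fun x hx => hA x d (lt_of_le_of_lt hc0 hx.1) hx.2 hd1 hcase2.le)
        rw [hconst] at hlt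
        have : d - c = δ := by linarith
        rw [this] at hlt; exact hlt
      have hii : (∫ x in d..e, gD W x) < δ * gD W d := by
        have hlt := intervalIntegral_lt hde' hint_de (intervalIntegrable_const)
          (fun x hx => by
            rcases le_or_gt x x₀ with hx₀' | hx₀'
            · exact hA d x hd0 hx.1 (lt_trans hx.2 he1) hx₀'
            · exact lt_of_lt_of_le (hM x e (hd0.trans hx.1) hx.2 he1 hx₀'.le) hsub)
        rw [hconst] at hlt
        have : e - d = δ := by linarith
        rw [this] at hlt; exact hlt
      rw [hI2, hI3]; linarith
    · -- contradiction: I2 < δ gD e < I1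
      exfalso
      have hi : (∫ x in d..e, gD W x) < δ * gD W e := by
        have hlt := intervalIntegral_lt hde' hint_de (intervalIntegrable_const)
          (fun x hx => by
            rcases le_or_gt x₀ x with hx₀' | hx₀'
            · exact hM x e (hd0.trans hx.1) hx.2 he1 hx₀'
            · exact lt_trans (hA d x hd0 hx.1 (lt_trans hx.2 he1) hx₀'.le) hsub)
        rw [hconst] at hlt
        have : e - d = δ := by linarith
        rw [this] at hlt; exact hlt
      have hii : δ * gD W e < ∫ x in e..bb, gD W x := by
        have hlt := intervalIntegral_lt heb' (intervalIntegrable_const) hint_eb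
          (fun x hx => hM e x he0 hx.1 (lt_of_lt_of_le hx.2 hb1) hcase1.le)
        rw [hconst] at hlt
        have : bb - e = δ := by linarith
        rw [this] at hlt; exact hlt
      rw [hI1, hI2] at hle; linarith

end Shape2

section Tail
variable {W : ℝ → ℝ} {N n : ℕ}

lemma gainW_tail_mono (hW : IsPWF W) (hn1 : 1 ≤ n) (hnN : n ≤ N)
    {j : ℕ} (hj : transIdx W N n + 1 ≤ j) (hjn : j + 1 ≤ n) :
    gainW W N n j ≤ gainW W N n (j+1) := by
  by_contra hcon
  push_neg at hcon
  set J := transIdx W N n with hJdef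
  have hJ1 : 1 ≤ J := (transIdx_mem (W:=W) (N:=N) hn1).1
  -- strict decrease everywhere below j
  have hchain : ∀ d k : ℕ, 1 ≤ k → k + 1 + d = j → gainW W N n (k+1) < gainW W N n k := by
    intro d
    induction d with
    | zero =>
      intro k hk1 hkj
      simp only [Nat.add_zero] at hkj
      by_contra h''
      push_neg at h''
      have := gainW_shape hW hn1 hnN hk1 (by omega) h''
      rw [show k + 2 = j + 1 by omega, show k + 1 = j by omega] at this
      linarith
    | succ d ih =>
      intro k hk1 hkj
      have h2 := ih (k+1) (by omega) (by omega)
      by_contra h''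
      push_neg at h''
      have := gainW_shape hW hn1 hnN hk1 (by omega) h''
      have : gainW W N n (k+1) < gainW W N n (k+1+1) := by
        rw [show k + 1 + 1 = k + 2 by omega]; exact this
      linarith
  have hdec : ∀ m : ℕ, 1 ≤ m → m < j → gainW W N n (m+1) < gainW W N n m := by
    intro m hm1 hmj
    exact hchain (j - m - 1) m hm1 (by omega)
  -- each h_k for k ≤ J exceeds h_{J+1}
  have hgt : ∀ d k : ℕ, 1 ≤ k → k + d + 1 = J + 1 → gainW W N n (J+1) < gainW W N n k := by
    intro d
    induction d with
    | zero =>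
      intro k hk1 hkJ
      have hkJ' : k = J := by omega
      rw [hkJ']
      exact hdec J hJ1 (by omega)
    | succ d ih =>
      intro k hk1 hkJ
      have h1 := ih (k+1) (by omega) (by omega)
      have h2 := hdec k hk1 (by omega)
      linarith
  have hJn : J < n := by omega
  have hmem := (transIdx_mem (W:=W) (N:=N) hn1).2.2
  rcases hmem with h | h
  · omega
  · -- S_J ≤ J * h_{J+1} but S_J > J * h_{J+1}
    have hsum : (J:ℝ) * gainW W N n (J+1) < ∑ j' ∈ Finset.Icc 1 J, gainW W N n j' := by
      have := Finset.sum_lt_sum_of_nonempty (s := Finset.Icc 1 J)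
        (f := fun _ => gainW W N n (J+1)) (g := fun k => gainW W N n k)
        ⟨1, by simp [hJ1]⟩
        (fun i hi => by
          simp only [Finset.mem_Icc] at hi
          exact hgt (J - i) i hi.1 (by omega))
      rw [Finset.sum_const, Nat.card_Icc] at this
      simpa [nsmul_eq_mul] using this
    rw [← hJdef] at h
    linarith

end Tail

theorem gainOpt_feasible_and_unique_min (W : ℝ → ℝ) (N n : ℕ) (α v : ℝ)
    (hW : IsPWF W) (hn1 : 1 ≤ n) (hnN : n ≤ N)
    (hα0 : 0 < α) (hα1 : α < 1) (hv : 0 < v) :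
    GainFeasible W N n v (gainOpt W N n α v) ∧
    ∀ y : ℕ → ℝ, GainFeasible W N n v y →
      (∃ j ∈ Finset.Icc 1 n, y j ≠ gainOpt W N n α v j) →
      ∑ j ∈ Finset.Icc 1 n, gainOpt W N n α v j ^ (1 / α) <
        ∑ j ∈ Finset.Icc 1 n, y j ^ (1 / α) := by
  obtain ⟨hJ1, hJn, hmem⟩ := transIdx_mem (W:=W) (N:=N) hn1
  set J := transIdx W N n with hJdef
  have h1α : 0 < 1 - α := by linarith
  set ee : ℝ := α / (1 - α) with heedef
  set q : ℝ := (1:ℝ) / (1 - α) with hqdef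
  have hee0 : 0 ≤ ee := by positivity
  have heq : 1 + ee = q := by rw [heedef, hqdef]; field_simp; ring
  set S : ℝ := ∑ j' ∈ Finset.Icc 1 J, gainW W N n j' with hSdef
  set T : ℝ := ∑ j' ∈ Finset.Icc (J+1) n, gainW W N n j' ^ q with hTdef
  have hS : 0 < S := sumW_pos hW hn1 hnN hJ1 hJn
  have hT : 0 ≤ T := by
    apply Finset.sum_nonneg
    intro i hi
    simp only [Finset.mem_Icc] at hi
    exact (Real.rpow_pos_of_pos (gainW_pos hW hn1 hnN (by omega) hi.2) q).le
  have hD : 0 < S ^ q + (J:ℝ)^ee * T := by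
    have h1 : (0:ℝ) < S ^ q := Real.rpow_pos_of_pos hS q
    have h2 : (0:ℝ) ≤ (J:ℝ)^ee := Real.rpow_nonneg (Nat.cast_nonneg J) ee
    nlinarith
  set Y : ℝ := gainY W N n α v with hYdef
  have hYeq : Y = v * S ^ ee / (S ^ q + (J:ℝ)^ee * T) := rfl
  have hY : 0 < Y := by
    rw [hYeq]
    exact div_pos (mul_pos hv (Real.rpow_pos_of_pos hS ee)) hD
  have hopt_le : ∀ j, j ≤ J → gainOpt W N n α v j = Y := fun j hj => if_pos hj
  have hopt_gt : ∀ j, J < j →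
      gainOpt W N n α v j = ((J:ℝ) * gainW W N n j / S) ^ ee * Y :=
    fun j hj => if_neg (by omega)
  have hJR : (0:ℝ) < (J:ℝ) := by exact_mod_cast hJ1
  have hopt_pos : ∀ j, 1 ≤ j → j ≤ n → 0 < gainOpt W N n α v j := by
    intro j hj1 hjn'
    by_cases hj : j ≤ J
    · rw [hopt_le j hj]; exact hY
    · rw [hopt_gt j (by omega)]
      have hgj := gainW_pos hW hn1 hnN hj1 hjn'
      exact mul_pos (Real.rpow_pos_of_pos (by positivity) ee) hY
  have hIoc : ∀ k : ℕ, Finset.Icc 1 k = Finset.Ioc 0 k := by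
    intro k; ext x; simp only [Finset.mem_Icc, Finset.mem_Ioc]; omega
  have hsplit : ∀ f : ℕ → ℝ, ∑ j ∈ Finset.Icc 1 n, f j
      = (∑ j ∈ Finset.Icc 1 J, f j) + ∑ j ∈ Finset.Icc (J+1) n, f j := by
    intro f
    rw [hIoc n, hIoc J, Finset.Icc_add_one_left_eq_Ioc]
    exact (Finset.sum_Ioc_consecutive f (Nat.zero_le J) hJn).symm
  -- feasibility: the weighted sum equals v
  have hfeas_sum : ∑ j ∈ Finset.Icc 1 n, gainW W N n j * gainOpt W N n α v j = v := by
    rw [hsplit]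
    have h1 : ∑ j ∈ Finset.Icc 1 J, gainW W N n j * gainOpt W N n α v j = S * Y := by
      rw [hSdef, Finset.sum_mul]
      apply Finset.sum_congr rfl
      intro j hj
      rw [hopt_le j (Finset.mem_Icc.1 hj).2]
    have h2 : ∑ j ∈ Finset.Icc (J+1) n, gainW W N n j * gainOpt W N n α v j
        = ((J:ℝ)^ee / S^ee) * Y * T := by
      rw [hTdef, Finset.mul_sum]
      apply Finset.sum_congr rfl
      intro j hj
      simp only [Finset.mem_Icc] at hj
      have hgj := gainW_pos hW hn1 hnN (by omega) hj.2
      rw [hopt_gt j (by omega)]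
      have e1 : (J:ℝ) * gainW W N n j / S = ((J:ℝ)/S) * gainW W N n j := by ring
      rw [e1, Real.mul_rpow (by positivity) hgj.le, Real.div_rpow (Nat.cast_nonneg J) hS.le]
      have e2 : gainW W N n j * gainW W N n j ^ ee = gainW W N n j ^ q := by
        rw [← heq, Real.rpow_add hgj, Real.rpow_one]
      calc gainW W N n j * ((J:ℝ)^ee/S^ee * gainW W N n j ^ ee * Y)
          = ((J:ℝ)^ee/S^ee) * Y * (gainW W N n j * gainW W N n j ^ ee) := by ring
        _ = ((J:ℝ)^ee/S^ee) * Y * gainW W N n j ^ q := by rw [e2]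
    rw [h1, h2, hYeq]
    have hSq : S ^ q = S * S ^ ee := by
      rw [← heq, Real.rpow_add hS, Real.rpow_one]
    rw [hSq]
    have hSee : (0:ℝ) < S ^ ee := Real.rpow_pos_of_pos hS ee
    have hDD : (0:ℝ) < S * S ^ ee + (J:ℝ)^ee * T := by rw [← hSq]; exact hD
    field_simp
  -- feasibility: monotonicity
  have hfeas_mono : ∀ j ∈ Finset.Icc 1 (n-1), gainOpt W N n α v j ≤ gainOpt W N n α v (j+1) := by
    intro j hj
    simp only [Finset.mem_Icc] at hj
    have hjn' : j + 1 ≤ n := by omega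
    by_cases hj1 : j + 1 ≤ J
    · rw [hopt_le j (by omega), hopt_le (j+1) hj1]
    · by_cases hj2 : j ≤ J
      · have hjJ : j = J := by omega
        rw [hopt_le j hj2, hopt_gt (j+1) (by omega)]
        have hmem' : S ≤ (J:ℝ) * gainW W N n (J+1) := by
          rcases hmem with h | h
          · exfalso; omega
          · exact h
        have hbase : 1 ≤ (J:ℝ) * gainW W N n (j+1) / S := by
          rw [le_div_iff₀ hS, one_mul, hjJ]; exact hmem'
        have h1r := Real.one_le_rpow hbase hee0
        nlinarith
      · rw [hopt_gt j (by omega), hopt_gt (j+1) (by omega)]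
        have hmono := gainW_tail_mono hW hn1 hnN (j := j) (by omega) hjn'
        have hgj1 : 0 < gainW W N n j := gainW_pos hW hn1 hnN (by omega) (by omega)
        apply mul_le_mul_of_nonneg_right ?_ hY.le
        apply Real.rpow_le_rpow (div_nonneg (mul_pos hJR hgj1).le hS.le) ?_ hee0
        gcongr
  refine ⟨⟨by rw [hopt_le 1 hJ1]; exact hY.le, hfeas_mono, hfeas_sum⟩, ?_⟩
  intro y hy hex
  obtain ⟨j₀, hj₀mem, hj₀ne⟩ := hex
  obtain ⟨hy0, hymono, hysum⟩ := hy
  set p : ℝ := 1/α with hpdef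
  have hp : 1 < p := by rw [hpdef, lt_div_iff₀ hα0]; linarith
  have hp0 : 0 < p := by linarith
  -- y is nonnegative on the range
  have hynn : ∀ j, 1 ≤ j → j ≤ n → 0 ≤ y j := by
    intro j
    induction j with
    | zero => omega
    | succ m ih =>
      intro _ hmn
      by_cases hm : m = 0
      · subst hm; exact hy0
      · have h1 : 1 ≤ m := by omega
        have h2 : m ≤ n := by omega
        have := hymono m (Finset.mem_Icc.2 ⟨h1, by omega⟩)
        linarith [ih h1 h2]
  set t : ℕ → ℝ := gainOpt W N n α v with htdef
  have htan_le : ∀ j ∈ Finset.Icc 1 n,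
      t j ^ p + p * t j ^ (p-1) * (y j - t j) ≤ y j ^ p := by
    intro j hj
    simp only [Finset.mem_Icc] at hj
    rcases eq_or_ne (y j) (t j) with h | h
    · rw [h]; simp
    · exact (tangent_lt (hopt_pos j hj.1 hj.2) (hynn j hj.1 hj.2) hp h).le
  have htan_lt : t j₀ ^ p + p * t j₀ ^ (p-1) * (y j₀ - t j₀) < y j₀ ^ p := by
    simp only [Finset.mem_Icc] at hj₀mem
    exact tangent_lt (hopt_pos j₀ hj₀mem.1 hj₀mem.2) (hynn j₀ hj₀mem.1 hj₀mem.2) hp hj₀ne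
  have hsum_lt := Finset.sum_lt_sum htan_le ⟨j₀, Finset.mem_Icc.2 (by
    simpa using hj₀mem), htan_lt⟩
  -- gradient term is nonnegative
  set K : ℝ := Y ^ (p-1) with hKdef
  have hK : 0 < K := Real.rpow_pos_of_pos hY _
  have htp1 : ∀ j, J < j → j ≤ n → t j ^ (p-1) = ((J:ℝ) * gainW W N n j / S) * K := by
    intro j hjJ hjn'
    rw [hopt_gt j hjJ]
    have hgj := gainW_pos hW hn1 hnN (by omega) hjn'
    have hbase : (0:ℝ) ≤ (J:ℝ) * gainW W N n j / S := by positivity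
    rw [Real.mul_rpow (Real.rpow_nonneg hbase ee) hY.le]
    congr 1
    rw [← Real.rpow_mul hbase]
    have he1 : ee * (p-1) = 1 := by
      rw [heedef, hpdef]
      field_simp
    rw [he1, Real.rpow_one]
  set G : ℝ := ∑ j ∈ Finset.Icc 1 n, p * t j ^ (p-1) * (y j - t j) with hGdef
  have hB3 : 0 ≤ ∑ j ∈ Finset.Icc 1 J, (S - (J:ℝ) * gainW W N n j) * y j := by
    have hMk : ∀ k, 1 ≤ k → k ≤ J → ∑ j ∈ Finset.Icc 1 k, (S - (J:ℝ) * gainW W N n j)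
        = (k:ℝ) * S - (J:ℝ) * ∑ j ∈ Finset.Icc 1 k, gainW W N n j := by
      intro k hk1 hkJ
      rw [Finset.sum_sub_distrib, Finset.sum_const, ← Finset.mul_sum, Nat.card_Icc]
      simp only [nsmul_eq_mul]
      have : (k + 1 - 1 : ℕ) = k := by omega
      rw [this]
    have h0 := abel_aux (fun j => S - (J:ℝ) * gainW W N n j) y J hJ1
      (fun k hk1 hkJ => by
        rw [hMk k hk1 hkJ.le]
        have := avg_le hW hn1 hnN (J - k) k hk1 (by omega)
        rw [← hSdef] at this
        linarith)
      (fun k hk1 hkJ => hymono k (Finset.mem_Icc.2 ⟨hk1, by omega⟩))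
    rw [hMk J hJ1 le_rfl, ← hSdef] at h0
    have : ((J:ℝ) * S - (J:ℝ) * S) * y J = 0 := by ring
    linarith [h0, this.symm.le.trans h0]
  have hG : 0 ≤ G := by
    -- split the gradient sum
    have hc1 : ∑ j ∈ Finset.Icc 1 J, p * t j ^ (p-1) * (y j - t j)
        = p * K * ∑ j ∈ Finset.Icc 1 J, (y j - Y) := by
      rw [Finset.mul_sum]
      apply Finset.sum_congr rfl
      intro j hj
      rw [hopt_le j (Finset.mem_Icc.1 hj).2]
      try rw [← hKdef]
      try ring
    have hc2 : ∑ j ∈ Finset.Icc (J+1) n, p * t j ^ (p-1) * (y j - t j)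
        = (p * K * (J:ℝ) / S) * ∑ j ∈ Finset.Icc (J+1) n, gainW W N n j * (y j - t j) := by
      rw [Finset.mul_sum]
      apply Finset.sum_congr rfl
      intro j hj
      simp only [Finset.mem_Icc] at hj
      rw [htp1 j (by omega) hj.2]
      field_simp
    have hexpand : ∀ (s : Finset ℕ) (z w : ℕ → ℝ),
        ∑ j ∈ s, gainW W N n j * (z j - w j)
        = (∑ j ∈ s, gainW W N n j * z j) - ∑ j ∈ s, gainW W N n j * w j := by
      intro s z w
      rw [← Finset.sum_sub_distrib]
      exact Finset.sum_congr rfl (fun j _ => by ring)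
    have e1 := hsplit (fun j => gainW W N n j * y j)
    have e2 := hsplit (fun j => gainW W N n j * t j)
    have e3 : ∑ j ∈ Finset.Icc 1 J, gainW W N n j * t j
        = ∑ j ∈ Finset.Icc 1 J, gainW W N n j * Y :=
      Finset.sum_congr rfl (fun j hj => by rw [hopt_le j (Finset.mem_Icc.1 hj).2])
    have hA : ∑ j ∈ Finset.Icc (J+1) n, gainW W N n j * (y j - t j)
        = - ∑ j ∈ Finset.Icc 1 J, gainW W N n j * (y j - Y) := by
      rw [hexpand, hexpand]
      rw [e1] at hysum
      rw [e2] at hfeas_sum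
      rw [e3] at hfeas_sum
      linarith
    -- linear algebra on the J-block
    have hU1 : ∑ j ∈ Finset.Icc 1 J, (y j - Y)
        = (∑ j ∈ Finset.Icc 1 J, y j) - (J:ℝ) * Y := by
      rw [Finset.sum_sub_distrib, Finset.sum_const, Nat.card_Icc]
      simp only [nsmul_eq_mul]
      have : (J + 1 - 1 : ℕ) = J := by omega
      rw [this]
    have hU2 : ∑ j ∈ Finset.Icc 1 J, gainW W N n j * (y j - Y)
        = (∑ j ∈ Finset.Icc 1 J, gainW W N n j * y j) - S * Y := by
      rw [hexpand]
      congr 1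
      rw [hSdef, Finset.sum_mul]
    have hU3 : ∑ j ∈ Finset.Icc 1 J, (S - (J:ℝ) * gainW W N n j) * y j
        = S * (∑ j ∈ Finset.Icc 1 J, y j) - (J:ℝ) * ∑ j ∈ Finset.Icc 1 J, gainW W N n j * y j := by
      rw [Finset.mul_sum, Finset.mul_sum, ← Finset.sum_sub_distrib]
      apply Finset.sum_congr rfl
      intro j hj
      ring
    rw [hGdef, hsplit, hc1, hc2, hA, hU1, hU2]
    have hfin : p * K * ((∑ j ∈ Finset.Icc 1 J, y j) - (J:ℝ) * Y)
        + (p * K * (J:ℝ) / S) * -((∑ j ∈ Finset.Icc 1 J, gainW W N n j * y j) - S * Y)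
        = (p * K / S) * ∑ j ∈ Finset.Icc 1 J, (S - (J:ℝ) * gainW W N n j) * y j := by
      rw [hU3]
      field_simp
      ring
    rw [hfin]
    have : 0 < p * K / S := by positivity
    positivity
  -- conclude
  have hLsum : ∑ j ∈ Finset.Icc 1 n, (t j ^ p + p * t j ^ (p-1) * (y j - t j))
      = (∑ j ∈ Finset.Icc 1 n, t j ^ p) + G := by
    rw [hGdef, ← Finset.sum_add_distrib]
  calc ∑ j ∈ Finset.Icc 1 n, t j ^ p
      ≤ (∑ j ∈ Finset.Icc 1 n, t j ^ p) + G := le_add_of_nonneg_right hG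
    _ = ∑ j ∈ Finset.Icc 1 n, (t j ^ p + p * t j ^ (p-1) * (y j - t j)) := hLsum.symm
    _ < ∑ j ∈ Finset.Icc 1 n, y j ^ p := hsum_lt
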